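/- arXiv:1704.05269 — 5 statements merged into one kernel-verified Lean document; each statement's English description precedes it below -/
import Mathlib

section
/- For real numbers ρ ∈ [0,1), if for all x the public distribution satisfies R[x] ∈ [(1-ρ)Pr[x], (1+ρ)Pr[x]], and for a given observation o the gap δ(o) = min over y ≠ o of (Pr[o|o]/Pr[o])·(Pr[y]/Pr[y|o]) − 1 is positive, and ρ < δ(o)/(2+δ(o)), then for all y ≠ o we have Pr[o|o]/R[o] > Pr[y|o]/R[y]; that is, truthful reporting maximizes expected PTS payment. -/
/-- If `R` is ρ-close to the common prior `Pr`, the gap δ(o) of the self-prediction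
is positive, and ρ < δ(o)/(2+δ(o)), then truthful reporting maximizes the expected
Peer Truth Serum payment. -/
theorem pts_truthful_when_R_close
    {X : Type*} [Fintype X]
    (Pr R : X → ℝ) (post : X → X → ℝ) (o : X) (ρ δ : ℝ)
    (hPr : ∀ x, 0 < Pr x) (hR : ∀ x, 0 < R x)
    (hpost : ∀ x y, 0 < post x y)
    (hρ0 : 0 ≤ ρ) (hρ1 : ρ < 1)
    (hclose : ∀ x, (1 - ρ) * Pr x ≤ R x ∧ R x ≤ (1 + ρ) * Pr x)
    (hδpos : 0 < δ)
    (hgap : ∀ y, y ≠ o → δ ≤ (post o o / Pr o) * (Pr y / post o y) - 1)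
    (hρδ : ρ < δ / (2 + δ)) :
    ∀ y, y ≠ o → post o o / R o > post o y / R y := by
  intro y hy
  have hp := hPr o
  have hq := hPr y
  have ha := hpost o o
  have hb := hpost o y
  have hRo := hR o
  have hRy := hR y
  have h1 : (1 + δ) * (Pr o * post o y) ≤ post o o * Pr y := by
    have hg := hgap y hy
    have h : 1 + δ ≤ (post o o / Pr o) * (Pr y / post o y) := by linarith
    calc (1 + δ) * (Pr o * post o y)
        ≤ ((post o o / Pr o) * (Pr y / post o y)) * (Pr o * post o y) :=
          mul_le_mul_of_nonneg_right h (by positivity)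
      _ = post o o * Pr y := by field_simp
  have hρδ' : ρ * (2 + δ) < δ := (lt_div_iff₀ (by linarith)).mp hρδ
  have hco := (hclose o).2
  have hcy := (hclose y).1
  rw [gt_iff_lt, div_lt_div_iff₀ hRy hRo]
  
  have h2 : post o y * R o ≤ post o y * ((1 + ρ) * Pr o) :=
    mul_le_mul_of_nonneg_left hco (le_of_lt hb)
  have h3 : post o o * ((1 - ρ) * Pr y) ≤ post o o * R y :=
    mul_le_mul_of_nonneg_left hcy (le_of_lt ha)
  nlinarith [mul_le_mul_of_nonneg_left h1 (by linarith : (0:ℝ) ≤ 1 - ρ),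
    mul_pos (by linarith : (0:ℝ) < δ - ρ * (2 + δ)) (mul_pos hp hb)]
end

section
/- The self-predicting condition implies stochastic relevance: if Pr is fully mixed and for every observation o, Pr[o|o]/Pr[o] > Pr[x|o]/Pr[x] for all x ≠ o, then for any two distinct observations o ≠ o', the posterior distributions Pr[·|o] and Pr[·|o'] are distinct. -/
/-- The self-predicting condition implies stochastic relevance. -/
theorem self_predicting_implies_stochastic_relevance
    {X : Type*} [Fintype X]
    (Pr : X → ℝ) (post : X → X → ℝ)
    (hPr : ∀ x, 0 < Pr x)
    (hsp : ∀ o x, x ≠ o → post o o / Pr o > post o x / Pr x) :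
    ∀ o o', o ≠ o' → ∃ z, post o z ≠ post o' z := by
  intro o o' h
  by_contra hc
  push_neg at hc
  have h1 := hsp o o' (Ne.symm h)
  have h2 := hsp o' o h
  rw [hc o, hc o'] at h1
  linarith
end

section
/- Suppose Pr is fully mixed, posteriors satisfy the self-predicting condition, and R = Pr. For the payment τ(r,rr) = f(rr) + g(r,rr) with g(r,rr) = 0 for r ≠ rr and g(x,x) = C/Pr[x]: truthful reporting is a strict best response against a truthful peer for every observation if and only if C > 0. -/
/-- With R = Pr and self-predicting posteriors, the PTS-form payment with diagonal
g(x,x) = C/Pr[x] makes truthful reporting a strict best response against a truthful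
peer (for every observation) if and only if C > 0. -/
theorem pts_truthful_iff_C_pos
    {X : Type*} [Fintype X] [Nontrivial X]
    (Pr : X → ℝ) (post : X → X → ℝ) (f : X → ℝ) (C : ℝ)
    (hPr : ∀ x, 0 < Pr x) (hsum : ∑ x, Pr x = 1)
    (hpost : ∀ o z, 0 < post o z) (hpostsum : ∀ o, ∑ z, post o z = 1)
    (hsp : ∀ o x, x ≠ o → post o o / Pr o > post o x / Pr x) :
    (∀ o y, y ≠ o →
        (∑ z, post o z * f z) + post o o * (C / Pr o) >
        (∑ z, post o z * f z) + post o y * (C / Pr y))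
      ↔ 0 < C := by
  constructor
  · intro h
    obtain ⟨o, y, hne⟩ := exists_pair_ne X
    by_contra hC
    push_neg at hC
    have h1 := h o y (by exact hne.symm)
    have h2 : post o o * (C / Pr o) > post o y * (C / Pr y) := by linarith
    have hsp' := hsp o y hne.symm
    rcases lt_or_eq_of_le hC with hlt | heq
    · have : C * (post o o / Pr o) < C * (post o y / Pr y) :=
        mul_lt_mul_of_neg_left hsp' hlt
      have e1 : post o o * (C / Pr o) = C * (post o o / Pr o) := by ring
      have e2 : post o y * (C / Pr y) = C * (post o y / Pr y) := by ring
      linarith [h2, e1 ▸ e2 ▸ this]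
    · subst heq
      simp at h2
  · intro hC o y hy
    have hsp' := hsp o y hy
    have : C * (post o y / Pr y) < C * (post o o / Pr o) :=
      mul_lt_mul_of_pos_left hsp' hC
    have e1 : post o o * (C / Pr o) = C * (post o o / Pr o) := by ring
    have e2 : post o y * (C / Pr y) = C * (post o y / Pr y) := by ring
    linarith
end

section
/- Let R be a fully mixed distribution on X = {x, y, z} and 0 < ε < min(R[y], 1 − R[z]). Define Pr[x] = R[x], Pr[y] = R[y] − ε, Pr[z] = R[z] + ε and posteriors Pr[x|y] = 0, Pr[y|y] = (Pr[y]+δ)·k, Pr[z|y] = (Pr[z]−δ)·k with k = 1/(Pr[y]+Pr[z]). Then for all sufficiently small δ > 0, the PTS expected reward for misreporting z upon observing y exceeds that for truthful reporting: Pr[z|y]/R[z] > Pr[y|y]/R[y]. -/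
/-- Counterexample construction for uninformed priors: for all sufficiently small
δ > 0, misreporting z after observing y yields a strictly higher PTS expected
reward than truthful reporting. -/
theorem uninformed_prior_misreport_better
    (Rx Ry Rz ε : ℝ)
    (hRx : 0 < Rx) (hRy : 0 < Ry) (hRz : 0 < Rz)
    (hRsum : Rx + Ry + Rz = 1)
    (hε0 : 0 < ε) (hεy : ε < Ry) (hεz : ε < 1 - Rz) :
    ∃ δ₀ > 0, ∀ δ : ℝ, 0 < δ → δ < δ₀ →
      ((Rz + ε) - δ) * (1 / ((Ry - ε) + (Rz + ε))) / Rz >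
      ((Ry - ε) + δ) * (1 / ((Ry - ε) + (Rz + ε))) / Ry := by
  refine ⟨ε, hε0, fun δ hδ hδε => ?_⟩
  have hs : (0:ℝ) < Ry + Rz := by linarith
  have hk : 0 < 1 / ((Ry - ε) + (Rz + ε)) := by
    apply one_div_pos.mpr; linarith
  rw [gt_iff_lt, div_lt_div_iff₀ hRy hRz]
  nlinarith [mul_pos hk (mul_pos hs (sub_pos.mpr hδε)), mul_pos hRy hRz,
    mul_pos hk hRy, mul_pos hk hRz]
end

section
/- For the quadratic (Brier) scoring rule S(R, x_s) = 2R[x_s] − Σ_x R[x]², the induced payment τ(r, rr, R) = ∂S(R, rr)/∂R[r] equals 2 − 2R[r] if r = rr and −2R[r] otherwise; and if the posterior satisfies the linear self-predicting condition Pr[o|o] − Pr[o] > Pr[x|o] − Pr[x] for all x ≠ o, then with R = Pr, truthful reporting o strictly maximizes the expected payment Σ_z Pr[z|o]·τ(y,z,Pr) over reports y against a truthful peer. -/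
/-- For the quadratic (Brier) scoring rule, the induced payment is 2 − 2R[r] on
agreement and −2R[r] otherwise; and under the linear self-predicting condition
(with R = Pr), truthful reporting strictly maximizes the expected payment against
a truthful peer. -/
theorem quadratic_score_pts
    {X : Type*} [Fintype X] [DecidableEq X]
    (Pr : X → ℝ) (post : X → X → ℝ)
    (hPr : ∀ x, 0 < Pr x) (hPrsum : ∑ x, Pr x = 1)
    (hpostsum : ∀ o, ∑ z, post o z = 1)
    (hsp : ∀ o x, x ≠ o → post o o - Pr o > post o x - Pr x) :
    (∀ r rr : X,
      HasDerivAt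
        (fun u : ℝ => 2 * Function.update Pr r u rr - ∑ x, (Function.update Pr r u x) ^ 2)
        (if r = rr then 2 - 2 * Pr r else -2 * Pr r) (Pr r)) ∧
    (∀ o y, y ≠ o →
      (∑ z, post o z * (if o = z then 2 - 2 * Pr o else -2 * Pr o)) >
      (∑ z, post o z * (if y = z then 2 - 2 * Pr y else -2 * Pr y))) := by
  constructor
  · intro r rr
    have hfun : (fun u : ℝ => 2 * Function.update Pr r u rr - ∑ x, (Function.update Pr r u x) ^ 2)
        = (fun u : ℝ => 2 * (if rr = r then u else Pr rr)
            - (u ^ 2 + ∑ x ∈ Finset.univ.erase r, Pr x ^ 2)) := by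
      funext u
      have h1 : Function.update Pr r u rr = if rr = r then u else Pr rr :=
        Function.update_apply Pr r u rr
      have h2 : (∑ x, (Function.update Pr r u x) ^ 2)
          = u ^ 2 + ∑ x ∈ Finset.univ.erase r, Pr x ^ 2 := by
        rw [← Finset.add_sum_erase _ _ (Finset.mem_univ r)]
        congr 1
        · simp
        · exact Finset.sum_congr rfl fun x hx => by
            rw [Function.update_of_ne (Finset.ne_of_mem_erase hx)]
      rw [h1, h2]
    rw [hfun]
    have hd : HasDerivAt (fun u : ℝ => 2 * (if rr = r then u else Pr rr)
        - (u ^ 2 + ∑ x ∈ Finset.univ.erase r, Pr x ^ 2))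
        ((if rr = r then (2:ℝ) else 0) - 2 * Pr r) (Pr r) := by
      apply HasDerivAt.sub
      · by_cases h : rr = r
        · simpa [h] using (hasDerivAt_id (Pr r)).const_mul (2:ℝ)
        · simpa [h] using hasDerivAt_const (Pr r) (2 * Pr rr)
      · have := ((hasDerivAt_pow 2 (Pr r)).add_const
          (∑ x ∈ Finset.univ.erase r, Pr x ^ 2))
        simpa using this
    convert hd using 1
    by_cases h : rr = r
    · simp [h]
    · have h' : ¬ r = rr := fun e => h e.symm
      simp [h, h']
  · intro o y hy
    have key : ∀ w : X, (∑ z, post o z * (if w = z then 2 - 2 * Pr w else -2 * Pr w))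
        = 2 * post o w - 2 * Pr w := by
      intro w
      have : ∀ z, post o z * (if w = z then 2 - 2 * Pr w else -2 * Pr w)
          = (if z = w then 2 * post o z else 0) + post o z * (-2 * Pr w) := by
        intro z
        by_cases h : w = z <;> simp [h, eq_comm] <;> ring
      simp only [this]
      rw [Finset.sum_add_distrib, Finset.sum_ite_eq' Finset.univ w (fun z => 2 * post o z),
        ← Finset.sum_mul, hpostsum o]
      simp
      ring
    rw [key o, key y]
    have := hsp o y hy
    linarith
end
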